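/- Let Y be a real symmetric positive semi-definite n×n matrix with eigendecomposition Y = Φ Σ_Y Φᵀ, where Φ is n×n orthogonal and Σ_Y = diag(σ_{1,Y}, …, σ_{n,Y}) with σ_{i,Y} ≥ 0. Let α > 0 and let Σ_{U₀}² = diag(σ_{1,0}, …, σ_{n,0}) with σ_{i,0} ≥ 0, and consider the initial condition W(0) = α Φ Σ_{U₀}² Φᵀ. Then the unique solution of Ẇ = WY + YW − 2W², W(0) = α Φ Σ_{U₀}² Φᵀ, has the form W(t) = Φ diag(σ_{1,W}(t), …, σ_{n,W}(t)) Φᵀ, where for each i: if σ_{i,Y} ≠ 0 then σ_{i,W}(t) = α σ_{i,Y} σ_{i,0} e^{2σ_{i,Y} t} / (σ_{i,Y} + α σ_{i,0}(e^{2σ_{i,Y} t} − 1)), and if σ_{i,Y} = 0 then σ_{i,W}(t) = α σ_{i,0} / (1 + 2 α σ_{i,0} t). -/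

import Mathlib

open scoped Matrix.Norms.L2Operator
open scoped Matrix

lemma diag_sum_aux {n : ℕ} (g : Fin n → ℝ) :
    Matrix.diagonal g = ∑ i, g i • Matrix.single i i (1 : ℝ) := by
  ext a b
  simp [Matrix.sum_apply, Matrix.single, Matrix.diagonal_apply, ite_and]

lemma diag_hasDerivAt_aux {n : ℕ} {f : Fin n → ℝ → ℝ} {f' : Fin n → ℝ} {t : ℝ}
    (h : ∀ i, HasDerivAt (f i) (f' i) t) :
    HasDerivAt (fun s => Matrix.diagonal (fun i => f i s)) (Matrix.diagonal f') t := by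
  simp only [diag_sum_aux]
  exact HasDerivAt.fun_sum fun i _ => (h i).smul_const _

lemma sigma_deriv_aux (d0 s0 α : ℝ) (hd : 0 ≤ d0) (hs : 0 ≤ s0) (hα : 0 < α)
    (σ : ℝ → ℝ)
    (hσ : ∀ u : ℝ, σ u = if d0 = 0 then α * s0 / (1 + 2 * α * s0 * u)
      else α * d0 * s0 * Real.exp (2 * d0 * u) /
        (d0 + α * s0 * (Real.exp (2 * d0 * u) - 1)))
    (t : ℝ) (ht : 0 ≤ t) :
    HasDerivAt σ (2 * d0 * σ t - 2 * (σ t)^2) t := by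
  have hfun : σ = fun u => if d0 = 0 then α * s0 / (1 + 2 * α * s0 * u)
      else α * d0 * s0 * Real.exp (2 * d0 * u) /
        (d0 + α * s0 * (Real.exp (2 * d0 * u) - 1)) := funext hσ
  by_cases hd0 : d0 = 0
  · have hden : (0:ℝ) < 1 + 2 * α * s0 * t := by positivity
    have hlin : HasDerivAt (fun u : ℝ => 1 + 2 * α * s0 * u) (2 * α * s0) t := by
      simpa using ((hasDerivAt_id t).const_mul (2 * α * s0)).const_add 1
    have h := (hasDerivAt_const t (α * s0)).div hlin hden.ne'
    rw [hfun]
    simp only [hd0, if_true]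
    refine h.congr_deriv ?_
    field_simp
    ring
  · have hd' : 0 < d0 := lt_of_le_of_ne hd (Ne.symm hd0)
    have hexp : (1:ℝ) ≤ Real.exp (2 * d0 * t) := Real.one_le_exp (by positivity)
    have hden : (0:ℝ) < d0 + α * s0 * (Real.exp (2 * d0 * t) - 1) := by
      have : 0 ≤ α * s0 * (Real.exp (2 * d0 * t) - 1) := by
        apply mul_nonneg (by positivity) (by linarith)
      linarith
    have hlin : HasDerivAt (fun u : ℝ => 2 * d0 * u) (2 * d0) t := by
      simpa using (hasDerivAt_id t).const_mul (2 * d0)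
    have hexp' : HasDerivAt (fun u : ℝ => Real.exp (2 * d0 * u))
        (Real.exp (2 * d0 * t) * (2 * d0)) t := hlin.exp
    have hnum : HasDerivAt (fun u : ℝ => α * d0 * s0 * Real.exp (2 * d0 * u))
        (α * d0 * s0 * (Real.exp (2 * d0 * t) * (2 * d0))) t := hexp'.const_mul _
    have hdenD : HasDerivAt (fun u : ℝ => d0 + α * s0 * (Real.exp (2 * d0 * u) - 1))
        (α * s0 * (Real.exp (2 * d0 * t) * (2 * d0))) t :=
      (((hexp'.sub_const 1).const_mul (α * s0)).const_add d0)
    have h := hnum.div hdenD hden.ne'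
    rw [hfun]
    simp only [hd0, if_false]
    refine h.congr_deriv ?_
    field_simp

/-- **Closed-form solution under spectral initialization.** With `Y = Φ diag(d) Φᵀ` PSD
(`Φ` orthogonal, `d i ≥ 0`) and spectral initialization `W(0) = α Φ diag(σ₀) Φᵀ`, the
unique solution of `Ẇ = WY + YW - 2W²` is `W(t) = Φ diag(σ_{i,W}(t)) Φᵀ` where
`σ_{i,W}(t) = α d_i σ₀ᵢ e^{2 d_i t}/(d_i + α σ₀ᵢ (e^{2 d_i t} - 1))` if `d_i ≠ 0`,
and `σ_{i,W}(t) = α σ₀ᵢ/(1 + 2 α σ₀ᵢ t)` if `d_i = 0`. -/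
theorem spectral_initialization_closed_form
    (n : ℕ)
    (Φ : Matrix (Fin n) (Fin n) ℝ) (hΦ : Φ * Φᵀ = 1 ∧ Φᵀ * Φ = 1)
    (d : Fin n → ℝ) (hd : ∀ i, 0 ≤ d i)
    (Y : Matrix (Fin n) (Fin n) ℝ) (hY : Y = Φ * Matrix.diagonal d * Φᵀ)
    (σ0 : Fin n → ℝ) (hσ0 : ∀ i, 0 ≤ σ0 i)
    (α : ℝ) (hα : 0 < α)
    (σW : Fin n → ℝ → ℝ)
    (hσW : ∀ (i : Fin n) (t : ℝ), σW i t =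
      if d i = 0 then α * σ0 i / (1 + 2 * α * σ0 i * t)
      else α * d i * σ0 i * Real.exp (2 * d i * t) /
        (d i + α * σ0 i * (Real.exp (2 * d i * t) - 1)))
    (W : ℝ → Matrix (Fin n) (Fin n) ℝ)
    (hW : ∀ t : ℝ, W t = Φ * Matrix.diagonal (fun i => σW i t) * Φᵀ) :
    W 0 = α • (Φ * Matrix.diagonal σ0 * Φᵀ) ∧
    (∀ t : ℝ, 0 ≤ t →
      HasDerivWithinAt W (W t * Y + Y * W t - 2 * (W t * W t)) (Set.Ici 0) t) ∧
    (∀ W' : ℝ → Matrix (Fin n) (Fin n) ℝ,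
      W' 0 = α • (Φ * Matrix.diagonal σ0 * Φᵀ) →
      (∀ t : ℝ, 0 ≤ t →
        HasDerivWithinAt W' (W' t * Y + Y * W' t - 2 * (W' t * W' t)) (Set.Ici 0) t) →
      ∀ t : ℝ, 0 ≤ t → W' t = W t) := by
  -- Part 1: initial condition
  have hinit : W 0 = α • (Φ * Matrix.diagonal σ0 * Φᵀ) := by
    have h0 : (fun i => σW i 0) = fun i => α * σ0 i := by
      funext i
      rw [hσW]
      by_cases hdi : d i = 0
      · simp [hdi]
      · simp only [hdi, if_false, mul_zero, Real.exp_zero]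
        field_simp
        simp [hdi]
    rw [hW 0, h0]
    have : Matrix.diagonal (fun i => α * σ0 i) = α • Matrix.diagonal σ0 := by
      ext a b
      by_cases h : a = b <;> simp [Matrix.diagonal_apply, h]
    rw [this, Matrix.mul_smul, Matrix.smul_mul]
  -- key algebraic identity
  have hmulkey : ∀ f g : Fin n → ℝ,
      (Φ * Matrix.diagonal f * Φᵀ) * (Φ * Matrix.diagonal g * Φᵀ) =
      Φ * Matrix.diagonal (fun i => f i * g i) * Φᵀ := by
    intro f g
    have h1 : Φᵀ * (Φ * (Matrix.diagonal g * Φᵀ)) = Matrix.diagonal g * Φᵀ := by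
      rw [← Matrix.mul_assoc, hΦ.2, Matrix.one_mul]
    rw [← Matrix.diagonal_mul_diagonal]
    simp only [Matrix.mul_assoc, h1]
  have hsum : ∀ t : ℝ, W t * Y + Y * W t - 2 * (W t * W t) =
      Φ * Matrix.diagonal (fun i => 2 * d i * σW i t - 2 * (σW i t)^2) * Φᵀ := by
    intro t
    rw [hW, hY, two_mul, hmulkey, hmulkey, hmulkey]
    rw [← Matrix.add_mul, ← Matrix.mul_add, ← Matrix.add_mul, ← Matrix.mul_add,
      ← Matrix.sub_mul, ← Matrix.mul_sub]
    congr 2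
    ext a b
    simp only [Matrix.sub_apply, Matrix.add_apply, Matrix.diagonal_apply]
    by_cases h : a = b
    · simp only [h, if_true]; ring
    · simp [h]
  -- Part 2: derivative
  have hderivAt : ∀ t : ℝ, 0 ≤ t →
      HasDerivAt W (W t * Y + Y * W t - 2 * (W t * W t)) t := by
    intro t ht
    have hσd : ∀ i, HasDerivAt (σW i) (2 * d i * σW i t - 2 * (σW i t)^2) t :=
      fun i => sigma_deriv_aux (d i) (σ0 i) α (hd i) (hσ0 i) hα (σW i) (hσW i) t ht
    have hD := diag_hasDerivAt_aux hσd
    have hWfun : W = fun u => Φ * Matrix.diagonal (fun i => σW i u) * Φᵀ := funext hW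
    rw [hsum t, hWfun]
    exact (hD.const_mul Φ).mul_const Φᵀ
  have hderiv : ∀ t : ℝ, 0 ≤ t →
      HasDerivWithinAt W (W t * Y + Y * W t - 2 * (W t * W t)) (Set.Ici 0) t :=
    fun t ht => (hderivAt t ht).hasDerivWithinAt
  refine ⟨hinit, hderiv, ?_⟩
  -- Part 3: uniqueness
  intro W' hW'0 hW'd t₀ ht₀
  have hW'c : ContinuousOn W' (Set.Icc 0 t₀) := fun s hs =>
    ((hW'd s hs.1).continuousWithinAt).mono Set.Icc_subset_Ici_self
  have hWc : ContinuousOn W (Set.Icc 0 t₀) := fun s hs =>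
    ((hderiv s hs.1).continuousWithinAt).mono Set.Icc_subset_Ici_self
  obtain ⟨R1, hR1⟩ := isCompact_Icc.exists_bound_of_continuousOn hWc
  obtain ⟨R2, hR2⟩ := isCompact_Icc.exists_bound_of_continuousOn hW'c
  set R : ℝ := max (max R1 R2) 0 with hR
  have hR0 : 0 ≤ R := le_max_right _ _
  set v : ℝ → Matrix (Fin n) (Fin n) ℝ → Matrix (Fin n) (Fin n) ℝ :=
    fun _ x => x * Y + Y * x - 2 * (x * x) with hv_def
  have hKnn : 0 ≤ 2 * ‖Y‖ + 4 * R := by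
    have := norm_nonneg Y; linarith
  have hv : ∀ t : ℝ, LipschitzOnWith (Real.toNNReal (2 * ‖Y‖ + 4 * R)) (v t)
      (Metric.closedBall (0 : Matrix (Fin n) (Fin n) ℝ) R) := by
    intro t
    rw [lipschitzOnWith_iff_dist_le_mul]
    intro x hx y hy
    rw [Metric.mem_closedBall, dist_zero_right] at hx hy
    rw [dist_eq_norm, dist_eq_norm, Real.coe_toNNReal _ hKnn]
    have key : v t x - v t y = (x - y) * Y + Y * (x - y) -
        (x * (x - y) + (x - y) * y + (x * (x - y) + (x - y) * y)) := by
      simp only [hv_def]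
      noncomm_ring
    rw [key]
    have n1 := norm_mul_le (x - y) Y
    have n2 := norm_mul_le Y (x - y)
    have n3 := norm_mul_le x (x - y)
    have n4 := norm_mul_le (x - y) y
    have hnn := norm_nonneg (x - y)
    calc ‖(x - y) * Y + Y * (x - y) -
        (x * (x - y) + (x - y) * y + (x * (x - y) + (x - y) * y))‖
        ≤ ‖(x - y) * Y + Y * (x - y)‖ +
          ‖x * (x - y) + (x - y) * y + (x * (x - y) + (x - y) * y)‖ := norm_sub_le _ _
      _ ≤ (‖(x - y) * Y‖ + ‖Y * (x - y)‖) +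
          ((‖x * (x - y)‖ + ‖(x - y) * y‖) + (‖x * (x - y)‖ + ‖(x - y) * y‖)) := by
          gcongr <;> first
            | exact norm_add_le _ _
            | exact le_trans (norm_add_le _ _) (by gcongr <;> exact norm_add_le _ _)
      _ ≤ (2 * ‖Y‖ + 4 * R) * ‖x - y‖ := by
          nlinarith [mul_le_mul_of_nonneg_right hx hnn, mul_le_mul_of_nonneg_right hy hnn]
  have h0 : W' 0 = W 0 := by rw [hW'0, hinit]
  have heq := ODE_solution_unique_of_mem_Icc_right (v := v)
    (s := fun _ => Metric.closedBall (0 : Matrix (Fin n) (Fin n) ℝ) R) (fun t _ => hv t)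
    hW'c
    (fun s hs => (hW'd s hs.1).mono (Set.Ici_subset_Ici.mpr hs.1))
    (fun s hs => by
      rw [Metric.mem_closedBall, dist_zero_right]
      exact le_trans (hR2 s (Set.Ico_subset_Icc_self hs))
        (le_trans (le_max_right R1 R2) (le_max_left _ _)))
    hWc
    (fun s hs => (hderiv s hs.1).mono (Set.Ici_subset_Ici.mpr hs.1))
    (fun s hs => by
      rw [Metric.mem_closedBall, dist_zero_right]
      exact le_trans (hR1 s (Set.Ico_subset_Icc_self hs))
        (le_trans (le_max_left R1 R2) (le_max_left _ _)))
    h0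
  exact heq ⟨ht₀, le_rfl⟩
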